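/- arXiv:1905.01690 — 5 statements merged into one kernel-verified Lean document; each statement's English description precedes it below -/
import Mathlib

section
/- Let f be analytic on the unit disk 𝔻 with f(0) = 0, f'(0) = 1, and f(z) ≠ 0 for z ∈ 𝔻 \ {0}. Suppose |(z/f(z))²·f'(z) − 1| < λ for all z ∈ 𝔻, where λ ∈ (0, 1/2]. Then f is injective on 𝔻. -/
open Metric Complex

theorem stmt_5 (f : ℂ → ℂ) (lam : ℝ)
    (hlam0 : 0 < lam) (hlam1 : lam ≤ 1 / 2)
    (hdiff : DifferentiableOn ℂ f (ball (0:ℂ) 1))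
    (hf0 : f 0 = 0) (hf1 : deriv f 0 = 1)
    (hfne : ∀ z ∈ ball (0:ℂ) 1, z ≠ 0 → f z ≠ 0)
    (hU : ∀ z ∈ ball (0:ℂ) 1, z ≠ 0 → ‖(z / f z) ^ 2 * deriv f z - 1‖ < lam) :
    Set.InjOn f (ball (0:ℂ) 1) := by
  set B := ball (0:ℂ) 1 with hBdef
  have hBo : IsOpen B := isOpen_ball
  have hB0 : (0:ℂ) ∈ B := mem_ball_self one_pos
  have hBn : B ∈ nhds (0:ℂ) := hBo.mem_nhds hB0
  -- h = dslope f 0, with h 0 = 1, h z = f z / z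
  set h : ℂ → ℂ := dslope f 0 with hhdef
  have hhd : DifferentiableOn ℂ h B :=
    (Complex.differentiableOn_dslope hBn).mpr hdiff
  have hh0 : h 0 = 1 := by simp [hhdef, dslope_same, hf1]
  have hhz : ∀ z : ℂ, z ≠ 0 → h z = f z / z := by
    intro z hz
    simp [hhdef, dslope_of_ne _ hz, slope_def_field, hf0]
  have hhne : ∀ z ∈ B, h z ≠ 0 := by
    intro z hz
    rcases eq_or_ne z 0 with rfl | hz0
    · simp [hh0]
    · rw [hhz z hz0]
      exact div_ne_zero (hfne z hz hz0) hz0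
  -- g = h⁻¹, with g 0 = 1, g z = z / f z
  set g : ℂ → ℂ := fun z => (h z)⁻¹ with hgdef
  have hgd : DifferentiableOn ℂ g B := fun z hz =>
    ((hhd z hz).inv (hhne z hz))
  have hg0 : g 0 = 1 := by simp [hgdef, hh0]
  have hgz : ∀ z : ℂ, z ≠ 0 → g z = z / f z := by
    intro z hz
    rw [hgdef]; simp only
    rw [hhz z hz, inv_div]
  -- ψ = dslope g 0; for z ≠ 0, ψ z = (g z - 1)/z = 1/f z - 1/z
  set ψ : ℂ → ℂ := dslope g 0 with hψdef
  have hψd : DifferentiableOn ℂ ψ B :=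
    (Complex.differentiableOn_dslope hBn).mpr hgd
  have hψz : ∀ z ∈ B, z ≠ 0 → ψ z = (f z)⁻¹ - z⁻¹ := by
    intro z hz hz0
    rw [hψdef]
    rw [dslope_of_ne _ hz0, slope_def_field, hg0, hgz z hz0]
    have hfz : f z ≠ 0 := hfne z hz hz0
    field_simp
    ring
  -- deriv ψ is differentiable on B
  have hψa : AnalyticOnNhd ℂ ψ B := hψd.analyticOnNhd hBo
  have hψ'd : DifferentiableOn ℂ (deriv ψ) B := hψa.deriv.differentiableOn
  -- formula for deriv ψ away from 0
  have hderψ : ∀ z ∈ B, z ≠ 0 →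
      deriv ψ z = -(deriv f z / (f z) ^ 2) + -(z ^ 2)⁻¹ * (-1) := by
    intro z hz hz0
    have hfz : f z ≠ 0 := hfne z hz hz0
    have hev : ψ =ᶠ[nhds z] fun w => (f w)⁻¹ - w⁻¹ := by
      have hmem : (B ∩ {w : ℂ | w ≠ 0}) ∈ nhds z :=
        (hBo.inter (isOpen_compl_singleton)).mem_nhds ⟨hz, hz0⟩
      filter_upwards [hmem] with w hw
      exact hψz w hw.1 hw.2
    rw [hev.deriv_eq]
    have h1 : HasDerivAt (fun w => (f w)⁻¹)
        (-(deriv f z / (f z) ^ 2)) z := by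
      have := ((hdiff.differentiableAt (hBo.mem_nhds hz)).hasDerivAt).fun_inv hfz
      simpa [div_eq_mul_inv] using this
    have h2 : HasDerivAt (fun w : ℂ => w⁻¹) (-(z ^ 2)⁻¹) z := by
      simpa using hasDerivAt_inv hz0
    have := h1.fun_sub h2
    simpa [sub_eq_add_neg, neg_neg] using this.deriv
  -- Φ z = z^2 * deriv ψ z, with ‖Φ‖ < lam on B
  set Φ : ℂ → ℂ := fun z => z ^ 2 * deriv ψ z with hΦdef
  have hΦd : DifferentiableOn ℂ Φ B := fun z hz =>
    ((differentiable_pow 2).differentiableAt.differentiableWithinAt.mul (hψ'd z hz))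
  have hΦ0 : Φ 0 = 0 := by simp [hΦdef]
  have hΦlt : ∀ z ∈ B, ‖Φ z‖ < lam := by
    intro z hz
    rcases eq_or_ne z 0 with rfl | hz0
    · simpa [hΦ0] using hlam0
    · have hfz : f z ≠ 0 := hfne z hz hz0
      have : Φ z = -((z / f z) ^ 2 * deriv f z - 1) := by
        rw [hΦdef]; simp only
        rw [hderψ z hz hz0]
        have hz2 : (z : ℂ) ^ 2 ≠ 0 := pow_ne_zero 2 hz0
        field_simp
        ring
      rw [this, norm_neg]
      exact hU z hz hz0
  have hΦmaps : Set.MapsTo Φ B (ball (Φ 0) lam) := by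
    intro z hz
    rw [hΦ0, mem_ball_zero_iff]
    exact hΦlt z hz
  -- First Schwarz: χ = dslope Φ 0 satisfies ‖χ‖ ≤ lam on B
  set χ : ℂ → ℂ := dslope Φ 0 with hχdef
  have hχle : ∀ z ∈ B, ‖χ z‖ ≤ lam := by
    intro z hz
    have := Complex.norm_dslope_le_div_of_mapsTo_ball hΦd (hΦmaps.mono_right ball_subset_closedBall) hz
    simpa using this
  -- deriv Φ 0 = 0
  have hΦ'0 : deriv Φ 0 = 0 := by
    have hu : DifferentiableAt ℂ (deriv ψ) 0 :=
      hψ'd.differentiableAt (hBo.mem_nhds hB0)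
    have : HasDerivAt Φ ((2 : ℕ) * (0:ℂ) ^ (2 - 1) * deriv ψ 0
        + (0:ℂ) ^ 2 * deriv (deriv ψ) 0) 0 :=
      (hasDerivAt_pow 2 (0:ℂ)).mul hu.hasDerivAt
    simpa using this.deriv
  have hχ0 : χ 0 = 0 := by rw [hχdef, dslope_same, hΦ'0]
  -- χ = z * deriv ψ z on B
  have hχeq : ∀ z : ℂ, z ≠ 0 → χ z = z * deriv ψ z := by
    intro z hz0
    rw [hχdef, dslope_of_ne _ hz0, slope_def_field, hΦ0, hΦdef]
    simp only
    field_simp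
    ring
  have hχd : DifferentiableOn ℂ χ B := by
    apply DifferentiableOn.congr (f := fun z => z * deriv ψ z)
    · exact fun z hz => (differentiableAt_id.differentiableWithinAt.mul (hψ'd z hz))
    · intro z hz
      rcases eq_or_ne z 0 with rfl | hz0
      · simp [hχ0]
      · exact hχeq z hz0
  -- dslope χ 0 = deriv ψ on B
  have hχ'0 : deriv χ 0 = deriv ψ 0 := by
    have hev : χ =ᶠ[nhds (0:ℂ)] fun z => z * deriv ψ z := by
      filter_upwards [hBn] with w hw
      rcases eq_or_ne w 0 with rfl | hw0
      · simp [hχ0]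
      · exact hχeq w hw0
    rw [hev.deriv_eq]
    have hu : DifferentiableAt ℂ (deriv ψ) 0 :=
      hψ'd.differentiableAt (hBo.mem_nhds hB0)
    have : HasDerivAt (fun z => z * deriv ψ z)
        (1 * deriv ψ 0 + 0 * deriv (deriv ψ) 0) 0 :=
      (hasDerivAt_id 0).mul hu.hasDerivAt
    simpa using this.deriv
  have hdψle : ∀ z ∈ B, ‖deriv ψ z‖ ≤ lam := by
    intro z hz
    have key : ∀ ε : ℝ, 0 < ε → ‖deriv ψ z‖ ≤ lam + ε := by
      intro ε hε
      have hmaps : Set.MapsTo χ B (ball (χ 0) (lam + ε)) := by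
        intro w hw
        rw [hχ0, mem_ball_zero_iff]
        exact lt_of_le_of_lt (hχle w hw) (by linarith)
      have := Complex.norm_dslope_le_div_of_mapsTo_ball hχd (hmaps.mono_right ball_subset_closedBall) hz
      rw [div_one] at this
      rcases eq_or_ne z 0 with rfl | hz0
      · rwa [dslope_same, hχ'0] at this
      · rw [dslope_of_ne _ hz0, slope_def_field, hχ0] at this
        have hval : (χ z - 0) / (z - 0) = deriv ψ z := by
          rw [hχeq z hz0, sub_zero, sub_zero, mul_comm, mul_div_assoc,
            div_self hz0, mul_one]
        rwa [hval] at this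
    by_contra hcon
    push_neg at hcon
    have := key ((‖deriv ψ z‖ - lam) / 2) (by linarith)
    linarith
  -- mean value: ψ is lam-Lipschitz on B
  have hlip : ∀ x ∈ B, ∀ y ∈ B, ‖ψ y - ψ x‖ ≤ lam * ‖y - x‖ := by
    intro x hx y hy
    refine Convex.norm_image_sub_le_of_norm_deriv_le
      (fun w hw => hψd.differentiableAt (hBo.mem_nhds hw))
      (fun w hw => hdψle w hw) (convex_ball 0 1) hx hy
  -- conclusion
  intro z₁ hz₁ z₂ hz₂ hf12
  by_contra hne
  have hz₁0 : z₁ ≠ 0 := by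
    rintro rfl
    exact hfne z₂ hz₂ (fun hh => hne hh.symm) (by rw [← hf12, hf0])
  have hz₂0 : z₂ ≠ 0 := by
    rintro rfl
    exact hfne z₁ hz₁ hz₁0 (by rw [hf12, hf0])
  have hfz₁ : f z₁ ≠ 0 := hfne z₁ hz₁ hz₁0
  have hfz₂ : f z₂ ≠ 0 := hfne z₂ hz₂ hz₂0
  have hinv : ∀ z ∈ B, z ≠ 0 → f z ≠ 0 → (f z)⁻¹ = z⁻¹ + ψ z := by
    intro z hz hz0 hfz
    rw [hψz z hz hz0]; ring
  have hkey : z₁⁻¹ - z₂⁻¹ = ψ z₂ - ψ z₁ := by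
    have e1 := hinv z₁ hz₁ hz₁0 hfz₁
    have e2 := hinv z₂ hz₂ hz₂0 hfz₂
    rw [hf12] at e1
    rw [e2] at e1
    linear_combination -e1
  have hsub0 : z₂ - z₁ ≠ 0 := sub_ne_zero.mpr (fun hh => hne hh.symm)
  have hnormpos : (0:ℝ) < ‖z₂ - z₁‖ := norm_pos_iff.mpr hsub0
  have hlhs : ‖z₁⁻¹ - z₂⁻¹‖ = ‖z₂ - z₁‖ / (‖z₁‖ * ‖z₂‖) := by
    have : z₁⁻¹ - z₂⁻¹ = (z₂ - z₁) / (z₁ * z₂) := by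
      field_simp
    rw [this, norm_div, norm_mul]
  have hn₁ : ‖z₁‖ < 1 := by rwa [hBdef, mem_ball_zero_iff] at hz₁
  have hn₂ : ‖z₂‖ < 1 := by rwa [hBdef, mem_ball_zero_iff] at hz₂
  have hn₁0 : 0 < ‖z₁‖ := norm_pos_iff.mpr hz₁0
  have hn₂0 : 0 < ‖z₂‖ := norm_pos_iff.mpr hz₂0
  have hprod : ‖z₁‖ * ‖z₂‖ < 1 := by nlinarith
  have hgt : ‖z₂ - z₁‖ < ‖z₁⁻¹ - z₂⁻¹‖ := by
    rw [hlhs]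
    rw [lt_div_iff₀ (by positivity)]
    nlinarith
  have hle : ‖z₁⁻¹ - z₂⁻¹‖ ≤ lam * ‖z₂ - z₁‖ := by
    rw [hkey]
    exact hlip z₁ hz₁ z₂ hz₂
  nlinarith
end

section
/- Let λ ∈ (0,1] and a ∈ ℂ with 0 < |a| < 1. There exists z₁ ∈ 𝔻 with z₁²/(1 + conj(a)·z₁²) = −1/(λ(1−|a|²)) if and only if |λ(1−|a|²) + conj(a)| > 1. -/
open Metric Complex

theorem stmt_6 (lam : ℝ) (a : ℂ)
    (hlam0 : 0 < lam) (hlam1 : lam ≤ 1)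
    (ha0 : 0 < ‖a‖) (ha1 : ‖a‖ < 1) :
    (∃ z₁ ∈ ball (0:ℂ) 1,
        z₁ ^ 2 / (1 + (starRingEnd ℂ a) * z₁ ^ 2)
          = -1 / ((lam : ℂ) * ((1 - ‖a‖ ^ 2 : ℝ) : ℂ)))
      ↔ 1 < ‖((lam * (1 - ‖a‖ ^ 2) : ℝ) : ℂ) + (starRingEnd ℂ a)‖ := by
  set C : ℂ := (lam : ℂ) * ((1 - ‖a‖ ^ 2 : ℝ) : ℂ) with hCdef
  have hCr : ((lam * (1 - ‖a‖ ^ 2) : ℝ) : ℂ) = C := by push_cast [hCdef]; ring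
  have hsq : ‖a‖ ^ 2 < 1 := by nlinarith [norm_nonneg a]
  have hcpos : (0:ℝ) < lam * (1 - ‖a‖ ^ 2) := mul_pos hlam0 (by linarith)
  have hC0 : C ≠ 0 := by
    rw [← hCr]
    exact_mod_cast Complex.ofReal_ne_zero.mpr (ne_of_gt hcpos)
  rw [hCr]
  set S : ℂ := C + (starRingEnd ℂ a) with hSdef
  constructor
  · rintro ⟨z, hz, heq⟩
    rw [mem_ball, dist_zero_right] at hz
    have hD : 1 + (starRingEnd ℂ a) * z ^ 2 ≠ 0 := by
      intro h
      rw [h, div_zero] at heq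
      have : (-1 : ℂ) = 0 := by
        field_simp at heq
        linear_combination -heq
      norm_num at this
    have key : z ^ 2 * S = -1 := by
      field_simp at heq
      rw [div_eq_iff (by rwa [mul_comm] at hD)] at heq
      rw [hSdef]; linear_combination heq
    have hz0 : z ≠ 0 := by
      intro h; rw [h] at key; simp at key
    have hnorm : ‖z‖ ^ 2 * ‖S‖ = 1 := by
      have := congrArg norm key
      simpa [norm_mul, norm_pow] using this
    have hz2 : ‖z‖ ^ 2 < 1 := by nlinarith [norm_nonneg z]
    have hz2pos : 0 < ‖z‖ ^ 2 := pow_pos (norm_pos_iff.mpr hz0) 2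
    nlinarith [norm_nonneg S]
  · intro h
    have hS0 : S ≠ 0 := by
      intro h0; rw [h0] at h; simp at h; linarith
    obtain ⟨z, hzw⟩ := IsAlgClosed.exists_pow_nat_eq (-1 / S) (n := 2) (by norm_num)
    refine ⟨z, ?_, ?_⟩
    · rw [mem_ball, dist_zero_right]
      have h1 : ‖z‖ ^ 2 = ‖(-1 : ℂ)‖ / ‖S‖ := by
        rw [← norm_pow, hzw, norm_div]
      have h2 : ‖z‖ ^ 2 < 1 := by
        rw [h1]; simp only [norm_neg, norm_one]
        rw [div_lt_one (by linarith : (0:ℝ) < ‖S‖)]; exact h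
      nlinarith [norm_nonneg z]
    · rw [hzw]
      have hden : 1 + (starRingEnd ℂ a) * (-1 / S) = C / S := by
        field_simp [hS0]
        rw [hSdef]; ring
      rw [hden]
      field_simp
end

section
/- Let λ > 0, μ ∈ ℂ with |1−μ| < λ, and set a = (1−μ)/λ. Let f be analytic on 𝔻 with f(0)=0, f'(0)=1, f(z) ≠ 0 for z ≠ 0, and suppose |(z/f(z))²f'(z) − μ| < λ on 𝔻. Write z/f(z) = 1 + ∑_{k=1}^∞ b_k z^k (Taylor expansion at 0, valid near 0 and hence with these coefficients). Then for every k ≥ 2, |b_k| ≤ (λ/(k−1))·(1 − |1−μ|²/λ²). -/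
open Metric Complex

noncomputable section StmtAux

namespace StmtAux

open FormalMultilinearSeries

/-- scalar power series -/
def ps (c : ℕ → ℂ) : FormalMultilinearSeries ℂ ℂ ℂ := ofScalars ℂ c

lemma ps_apply (c : ℕ → ℂ) (n : ℕ) (z : ℂ) : ps c n (fun _ => z) = c n * z ^ n := by
  rw [ps, ofScalars_apply_eq, smul_eq_mul]

lemma ps_coeff (c : ℕ → ℂ) (n : ℕ) : (ps c).coeff n = c n := by
  show ps c n (fun _ => 1) = c n
  rw [ps_apply, one_pow, mul_one]

lemma ps_norm (c : ℕ → ℂ) (n : ℕ) : ‖ps c n‖ = ‖c n‖ := by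
  rw [FormalMultilinearSeries.norm_apply_eq_norm_coef, ps_coeff]

/-- Schwarz–Pick derivative bound at the origin. -/
lemma sp (F : ℂ → ℂ) (hd : DifferentiableOn ℂ F (ball 0 1))
    (hbd : ∀ w ∈ ball (0:ℂ) 1, ‖F w‖ ≤ 1) (h0 : ‖F 0‖ < 1) :
    ‖deriv F 0‖ ≤ 1 - ‖F 0‖ ^ 2 := by
  set a : ℂ := F 0 with ha
  have hna : ‖a‖ < 1 := h0
  set g : ℂ → ℂ := fun z => (a - F z) / (1 - (starRingEnd ℂ) a * F z) with hg
  have hden : ∀ z ∈ ball (0:ℂ) 1, 1 - (starRingEnd ℂ) a * F z ≠ 0 := by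
    intro z hz h
    have h1 : ‖(starRingEnd ℂ) a * F z‖ < 1 := by
      rw [norm_mul, RCLike.norm_conj]
      calc ‖a‖ * ‖F z‖ ≤ ‖a‖ * 1 := by
            exact mul_le_mul_of_nonneg_left (hbd z hz) (norm_nonneg _)
        _ < 1 := by simpa using hna
    have : (1:ℂ) = (starRingEnd ℂ) a * F z := by
      have := sub_eq_zero.mp h; exact this
    rw [← this] at h1; simp at h1
  have hgle : ∀ z ∈ ball (0:ℂ) 1, ‖g z‖ ≤ 1 := by
    intro z hz
    have hw : ‖F z‖ ≤ 1 := hbd z hz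
    set w : ℂ := F z with hwdef
    have key : Complex.normSq (a - w) ≤ Complex.normSq (1 - (starRingEnd ℂ) a * w) := by
      have expand : Complex.normSq (1 - (starRingEnd ℂ) a * w) - Complex.normSq (a - w)
          = (1 - Complex.normSq a) * (1 - Complex.normSq w) := by
        simp only [Complex.normSq_apply, Complex.sub_re, Complex.sub_im, Complex.mul_re,
          Complex.mul_im, Complex.conj_re, Complex.conj_im, Complex.one_re, Complex.one_im]
        ring
      have h1 : Complex.normSq a ≤ 1 := by
        rw [Complex.normSq_eq_norm_sq]
        nlinarith [norm_nonneg a, hna.le]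
      have h2 : Complex.normSq w ≤ 1 := by
        rw [Complex.normSq_eq_norm_sq]
        nlinarith [norm_nonneg w, hw]
      nlinarith [expand]
    have : ‖a - w‖ ≤ ‖1 - (starRingEnd ℂ) a * w‖ := by
      rw [Complex.norm_def, Complex.norm_def]
      exact Real.sqrt_le_sqrt key
    rw [hg]
    simp only [norm_div]
    rcases eq_or_ne (1 - (starRingEnd ℂ) a * w) 0 with h | h
    · exact absurd h (hden z hz)
    · rw [div_le_one (norm_pos_iff.mpr h)]; exact this
  have hFd0 : DifferentiableAt ℂ F 0 :=
    hd.differentiableAt (isOpen_ball.mem_nhds (mem_ball_self one_pos))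
  have hgd : DifferentiableOn ℂ g (ball 0 1) := by
    apply DifferentiableOn.div
    · exact (differentiableOn_const _).sub hd
    · exact (differentiableOn_const _).sub ((differentiableOn_const _).mul hd)
    · exact hden
  have hg0 : g 0 = 0 := by simp [hg, ← ha]
  have hgderiv : ∀ R : ℝ, 1 < R → ‖deriv g 0‖ ≤ R := by
    intro R hR
    have := Complex.norm_deriv_le_div_of_mapsTo_ball (c := (0:ℂ)) (R₁ := 1) (R₂ := R) hgd
      (fun z hz => by
        rw [hg0, mem_closedBall, dist_eq_norm, sub_zero]
        exact le_trans (hgle z hz) hR.le) one_pos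
    simpa using this
  have hgderiv1 : ‖deriv g 0‖ ≤ 1 := by
    by_contra h
    push_neg at h
    have h2 : (1 + ‖deriv g 0‖)/2 < ‖deriv g 0‖ := by linarith
    exact absurd (hgderiv _ (by linarith)) (not_le.mpr h2)
  -- compute deriv g 0
  set d : ℂ := deriv F 0 with hdd
  set u : ℂ := 1 - (starRingEnd ℂ) a * a with hu
  have hu0 : u ≠ 0 := hden 0 (mem_ball_self one_pos)
  have hFder : HasDerivAt F d 0 := hFd0.hasDerivAt
  have hnum : HasDerivAt (fun z => a - F z) (-d) 0 := by
    have h := (hasDerivAt_const (0:ℂ) a).sub hFder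
    rw [zero_sub] at h
    exact h
  have hdenom : HasDerivAt (fun z => 1 - (starRingEnd ℂ) a * F z) (-((starRingEnd ℂ) a * d)) 0 := by
    have h := (hasDerivAt_const (0:ℂ) (1:ℂ)).sub (hFder.const_mul ((starRingEnd ℂ) a))
    rw [zero_sub] at h
    exact h
  have hdiv : HasDerivAt g ((-d * u - (a - a) * (-((starRingEnd ℂ) a * d))) / u ^ 2) 0 := by
    have := hnum.div hdenom hu0
    exact this
  have hderiv_eq : deriv g 0 = -d / u := by
    rw [hdiv.deriv]
    field_simp
    ring
  have hureal : u = ((1 - ‖a‖^2 : ℝ) : ℂ) := by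
    rw [hu, mul_comm, Complex.mul_conj, Complex.normSq_eq_norm_sq]
    push_cast
    ring
  have hnu : ‖u‖ = 1 - ‖a‖^2 := by
    rw [hureal, Complex.norm_real, Real.norm_eq_abs, abs_of_pos]
    nlinarith [norm_nonneg a]
  have : ‖d‖ / (1 - ‖a‖^2) ≤ 1 := by
    rw [← hnu, ← norm_div]
    calc ‖d / u‖ = ‖-d/u‖ := by rw [neg_div, norm_neg]
      _ = ‖deriv g 0‖ := by rw [hderiv_eq]
      _ ≤ 1 := hgderiv1
  have hpos : 0 < 1 - ‖a‖^2 := by nlinarith [norm_nonneg a]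
  calc ‖deriv F 0‖ = ‖d‖ := rfl
    _ ≤ 1 - ‖a‖^2 := by rw [div_le_one hpos] at this; exact this
    _ = 1 - ‖F 0‖^2 := by rw [ha]

/-- Coefficient bound for maps into the closed unit disk. -/
lemma schwarz_coeff (c : ℕ → ℂ) (Ω : ℂ → ℂ)
    (hsum : ∀ z ∈ ball (0:ℂ) 1, HasSum (fun n => c n * z ^ n) (Ω z))
    (hbd : ∀ z ∈ ball (0:ℂ) 1, ‖Ω z‖ ≤ 1) (hc0 : ‖c 0‖ < 1)
    {k : ℕ} (hk : 1 ≤ k) : ‖c k‖ ≤ 1 - ‖c 0‖ ^ 2 := by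
  have hk0 : k ≠ 0 := by omega
  have htend : ∀ r : ℝ, 0 < r → r < 1 →
      Filter.Tendsto (fun n => ‖c n‖ * r ^ n) Filter.atTop (nhds 0) := by
    intro r hr0 hr1
    have hball : (r:ℂ) ∈ ball (0:ℂ) 1 := by
      rw [mem_ball, dist_zero_right, Complex.norm_real, Real.norm_eq_abs, abs_of_pos hr0]
      exact hr1
    have h := ((hsum _ hball).summable.tendsto_atTop_zero).norm
    simp only [norm_zero] at h
    have heq : (fun n => ‖c n‖ * r ^ n) = fun n => ‖c n * (r:ℂ) ^ n‖ := by
      funext n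
      rw [norm_mul, norm_pow, Complex.norm_real, Real.norm_eq_abs, abs_of_pos hr0]
    rw [heq]
    exact h
  set q := ps (fun m => c (m * k)) with hqdef
  have hqr : 1 ≤ q.radius := by
    apply ENNReal.le_of_forall_nnreal_lt
    intro r hr
    rcases eq_or_ne r 0 with rfl | hr0
    · simp
    have hrpos : (0:ℝ) < r := lt_of_le_of_ne r.coe_nonneg (by exact_mod_cast hr0.symm)
    have hr1 : (r:ℝ) < 1 := by exact_mod_cast hr
    set ρ : ℝ := (r:ℝ) ^ ((k:ℝ)⁻¹) with hρdef
    have hρ0 : 0 < ρ := Real.rpow_pos_of_pos hrpos _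
    have hρ1 : ρ < 1 := Real.rpow_lt_one hrpos.le hr1 (by positivity)
    have hρk : ρ ^ k = (r:ℝ) := by
      rw [hρdef, ← Real.rpow_natCast ((r:ℝ) ^ ((k:ℝ)⁻¹)) k, ← Real.rpow_mul hrpos.le,
        inv_mul_cancel₀ (by exact_mod_cast hk0), Real.rpow_one]
    have hcomp : Filter.Tendsto (fun n : ℕ => n * k) Filter.atTop Filter.atTop :=
      Filter.tendsto_atTop_atTop.mpr fun b =>
        ⟨b, fun a ha => le_trans ha (Nat.le_mul_of_pos_right a (by omega))⟩
    have ht2 := (htend ρ hρ0 hρ1).comp hcomp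
    apply q.le_radius_of_tendsto (l := 0)
    have heq : (fun n => ‖q n‖ * (r:ℝ) ^ n)
        = (fun n => ‖c n‖ * ρ ^ n) ∘ (fun n : ℕ => n * k) := by
      funext n
      simp only [Function.comp_apply, hqdef, ps_norm]
      rw [← hρk, ← pow_mul, mul_comm k n]
    rw [heq]
    exact ht2
  have hq : HasFPowerSeriesOnBall q.sum q 0 1 :=
    (q.hasFPowerSeriesOnBall (lt_of_lt_of_le zero_lt_one hqr)).mono zero_lt_one hqr
  set F := q.sum with hFdef
  have hFs : ∀ w ∈ ball (0:ℂ) 1, HasSum (fun m => c (m * k) * w ^ m) (F w) := by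
    intro w hw
    have hw' : w ∈ EMetric.ball (0:ℂ) 1 := by
      show _ ∈ eball (0:ℂ) 1
      rw [mem_emetric_ball_zero_iff, ← ofReal_norm, ENNReal.ofReal_lt_one]
      exact_mod_cast mem_ball_zero_iff.mp hw
    have h := hq.hasSum hw'
    rw [zero_add] at h
    have heq : (fun n => q n fun _ => w) = fun m => c (m * k) * w ^ m := by
      funext n
      rw [hqdef, ps_apply]
    rwa [heq] at h
  have hF0 : F 0 = c 0 := by
    have h00 := hFs 0 (mem_ball_self one_pos)
    have h01 : HasSum (fun m => c (m * k) * (0:ℂ) ^ m) (c 0) := by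
      have := hasSum_single (f := fun m => c (m * k) * (0:ℂ) ^ m) 0
        (fun m hm => by simp [zero_pow hm])
      simpa using this
    exact h00.unique h01
  have hFderiv : deriv F 0 = c k := by
    rw [hq.hasFPowerSeriesAt.deriv]
    have : q 1 (fun _ => (1:ℂ)) = c (1 * k) * 1 ^ 1 := by rw [hqdef, ps_apply]
    rw [this, one_mul, one_pow, mul_one]
  have hFbd : ∀ w ∈ ball (0:ℂ) 1, ‖F w‖ ≤ 1 := by
    intro w hw
    obtain ⟨z, hzk⟩ := IsAlgClosed.exists_pow_nat_eq w (show 0 < k by omega)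
    have hzn : ‖z‖ < 1 := by
      by_contra h
      push_neg at h
      have h1 : (1:ℝ) ≤ ‖z‖ ^ k := one_le_pow₀ h
      rw [← norm_pow, hzk] at h1
      exact absurd (mem_ball_zero_iff.mp hw) (not_lt.mpr h1)
    set ζ : ℂ := Complex.exp (2 * Real.pi * Complex.I / k) with hζdef
    have hζ : IsPrimitiveRoot ζ k := Complex.isPrimitiveRoot_exp k hk0
    have hζnorm : ‖ζ‖ = 1 := by
      rw [hζdef]
      have heq : 2 * (Real.pi:ℂ) * Complex.I / k = ((2 * Real.pi / k : ℝ) : ℂ) * Complex.I := by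
        push_cast; ring
      rw [heq, Complex.norm_exp_ofReal_mul_I]
    have hmem : ∀ j : ℕ, ζ ^ j * z ∈ ball (0:ℂ) 1 := by
      intro j
      rw [mem_ball_zero_iff, norm_mul, norm_pow, hζnorm, one_pow, one_mul]
      exact hzn
    have hS : HasSum (fun n => ∑ j ∈ Finset.range k, c n * (ζ ^ j * z) ^ n)
        (∑ j ∈ Finset.range k, Ω (ζ ^ j * z)) :=
      hasSum_sum (fun j _ => hsum _ (hmem j))
    have hkey : ∀ n, ∑ j ∈ Finset.range k, c n * (ζ ^ j * z) ^ n
        = if k ∣ n then (k:ℂ) * (c n * z ^ n) else 0 := by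
      intro n
      have hterm : ∀ j, c n * (ζ ^ j * z) ^ n = (c n * z ^ n) * ((ζ ^ n) ^ j) := by
        intro j
        rw [mul_pow, ← pow_mul, mul_comm j n, pow_mul]
        ring
      simp only [hterm, ← Finset.mul_sum]
      by_cases hdvd : k ∣ n
      · rw [if_pos hdvd]
        have h1 : ζ ^ n = 1 := (hζ.pow_eq_one_iff_dvd n).mpr hdvd
        rw [h1]
        simp [mul_comm]
      · rw [if_neg hdvd]
        have hne : ζ ^ n ≠ 1 := fun h => hdvd ((hζ.pow_eq_one_iff_dvd n).mp h)
        rw [geom_sum_eq hne]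
        have h1 : (ζ ^ n) ^ k = 1 := by
          rw [← pow_mul, mul_comm n k, pow_mul, hζ.pow_eq_one, one_pow]
        rw [h1]
        simp
    have hS' : HasSum (fun n => if k ∣ n then (k:ℂ) * (c n * z ^ n) else 0)
        (∑ j ∈ Finset.range k, Ω (ζ ^ j * z)) := by
      rwa [funext hkey] at hS
    have hFw := (hFs w hw).mul_left (k:ℂ)
    have hinj : Function.Injective (fun m : ℕ => m * k) := fun m1 m2 h =>
      Nat.eq_of_mul_eq_mul_right (by omega) h
    have hzero : ∀ n ∉ Set.range (fun m : ℕ => m * k),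
        (if k ∣ n then (k:ℂ) * (c n * z ^ n) else 0) = 0 := by
      intro n hn
      rw [if_neg]
      intro hdvd
      obtain ⟨m, rfl⟩ := hdvd
      exact hn ⟨m, mul_comm m k⟩
    have hcomp : ((fun n => if k ∣ n then (k:ℂ) * (c n * z ^ n) else 0) ∘ (fun m : ℕ => m * k))
        = fun m => (k:ℂ) * (c (m * k) * w ^ m) := by
      funext m
      simp only [Function.comp_apply]
      rw [if_pos ⟨m, mul_comm m k⟩, ← hzk, ← pow_mul, mul_comm k m]
    have hFw2 : HasSum (fun n => if k ∣ n then (k:ℂ) * (c n * z ^ n) else 0) ((k:ℂ) * F w) := by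
      rw [← hinj.hasSum_iff hzero, hcomp]
      exact hFw
    have hEq : (k:ℂ) * F w = ∑ j ∈ Finset.range k, Ω (ζ ^ j * z) := hFw2.unique hS'
    have hkpos : (0:ℝ) < k := by exact_mod_cast Nat.pos_of_ne_zero hk0
    have hbound : (k:ℝ) * ‖F w‖ ≤ (k:ℝ) * 1 := by
      calc (k:ℝ) * ‖F w‖ = ‖(k:ℂ) * F w‖ := by
            rw [norm_mul, Complex.norm_natCast]
        _ = ‖∑ j ∈ Finset.range k, Ω (ζ ^ j * z)‖ := by rw [hEq]
        _ ≤ ∑ j ∈ Finset.range k, ‖Ω (ζ ^ j * z)‖ := norm_sum_le _ _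
        _ ≤ ∑ j ∈ Finset.range k, 1 := Finset.sum_le_sum (fun j _ => hbd _ (hmem j))
        _ = (k:ℝ) * 1 := by simp
    exact le_of_mul_le_mul_left hbound hkpos
  have hFdiff : DifferentiableOn ℂ F (ball 0 1) := by
    have h := hq.differentiableOn
    apply h.mono
    intro x hx
    rw [mem_emetric_ball_zero_iff, ← ofReal_norm, ENNReal.ofReal_lt_one]
    exact_mod_cast mem_ball_zero_iff.mp hx
  have hsp := sp F hFdiff hFbd (by rw [hF0]; exact hc0)
  rw [hFderiv, hF0] at hsp
  exact hsp

end StmtAux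

end StmtAux

theorem stmt_8 (lam : ℝ) (μ : ℂ) (f : ℂ → ℂ) (b : ℕ → ℂ)
    (hlam : 0 < lam) (hμ : ‖1 - μ‖ < lam)
    (hdiff : DifferentiableOn ℂ f (ball (0:ℂ) 1))
    (hf0 : f 0 = 0) (hf1 : deriv f 0 = 1)
    (hfne : ∀ z ∈ ball (0:ℂ) 1, z ≠ 0 → f z ≠ 0)
    (hU : ∀ z ∈ ball (0:ℂ) 1, z ≠ 0 → ‖(z / f z) ^ 2 * deriv f z - μ‖ < lam)
    (hb0 : b 0 = 1)
    (hb : ∀ z ∈ ball (0:ℂ) 1, z ≠ 0 →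
      HasSum (fun k : ℕ => b k * z ^ k) (z / f z)) :
    ∀ k : ℕ, 2 ≤ k →
      ‖b k‖ ≤ (lam / ((k : ℝ) - 1)) * (1 - ‖1 - μ‖ ^ 2 / lam ^ 2) := by
  intro k hk
  set p := StmtAux.ps b with hpdef
  have hrad : 1 ≤ p.radius := by
    apply ENNReal.le_of_forall_nnreal_lt
    intro r hr
    rcases eq_or_ne r 0 with rfl | hr0
    · simp
    have hrpos : (0:ℝ) < r := lt_of_le_of_ne r.coe_nonneg (by exact_mod_cast hr0.symm)
    have hr1 : (r:ℝ) < 1 := by exact_mod_cast hr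
    have hball : (((r:ℝ)):ℂ) ∈ ball (0:ℂ) 1 := by
      rw [mem_ball_zero_iff, Complex.norm_real, Real.norm_eq_abs, abs_of_pos hrpos]
      exact hr1
    have hne : (((r:ℝ)):ℂ) ≠ 0 := by exact_mod_cast (ne_of_gt hrpos)
    have h := ((hb _ hball hne).summable.tendsto_atTop_zero).norm
    simp only [norm_zero] at h
    apply p.le_radius_of_tendsto (l := 0)
    have heq : (fun n => ‖p n‖ * (r:ℝ) ^ n) = fun n => ‖b n * (((r:ℝ)):ℂ) ^ n‖ := by
      funext n
      rw [hpdef, StmtAux.ps_norm, norm_mul, norm_pow, Complex.norm_real, Real.norm_eq_abs,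
        abs_of_pos hrpos]
    rw [heq]
    exact h
  have hG : HasFPowerSeriesOnBall p.sum p 0 1 :=
    (p.hasFPowerSeriesOnBall (lt_of_lt_of_le zero_lt_one hrad)).mono zero_lt_one hrad
  set G := p.sum with hGdef
  have hGs : ∀ z ∈ ball (0:ℂ) 1, HasSum (fun n => b n * z ^ n) (G z) := by
    intro z hz
    have hz' : z ∈ EMetric.ball (0:ℂ) 1 := by
      show _ ∈ eball (0:ℂ) 1
      rw [mem_emetric_ball_zero_iff, ← ofReal_norm, ENNReal.ofReal_lt_one]
      exact_mod_cast mem_ball_zero_iff.mp hz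
    have h := hG.hasSum hz'
    rw [zero_add] at h
    have heq : (fun n => p n fun _ => z) = fun n => b n * z ^ n := by
      funext n; rw [hpdef, StmtAux.ps_apply]
    rwa [heq] at h
  have hGf : ∀ z ∈ ball (0:ℂ) 1, z ≠ 0 → G z = z / f z := fun z hz hz0 =>
    (hGs z hz).unique (hb z hz hz0)
  have hG0 : G 0 = 1 := by
    have h00 := hGs 0 (mem_ball_self one_pos)
    have h01 : HasSum (fun n => b n * (0:ℂ) ^ n) (1:ℂ) := by
      have := hasSum_single (f := fun n => b n * (0:ℂ) ^ n) 0
        (fun m hm => by simp [zero_pow hm])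
      simpa [hb0] using this
    exact h00.unique h01
  -- derivative sum
  have hdG : ∀ z ∈ ball (0:ℂ) 1,
      HasSum (fun n : ℕ => (n:ℂ) * b n * z ^ n) (z * deriv G z) := by
    intro z hz
    have hz' : z ∈ EMetric.ball (0:ℂ) 1 := by
      show _ ∈ eball (0:ℂ) 1
      rw [mem_emetric_ball_zero_iff, ← ofReal_norm, ENNReal.ofReal_lt_one]
      exact_mod_cast mem_ball_zero_iff.mp hz
    have h := hG.fderiv.hasSum hz'
    rw [zero_add] at h
    have h2 := (ContinuousLinearMap.apply ℂ ℂ z).hasSum h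
    have heval : (fderiv ℂ G z) z = z * deriv G z := by
      have hm := (fderiv ℂ G z).map_smul z (1:ℂ)
      rw [smul_eq_mul, mul_one] at hm
      rw [hm, smul_eq_mul, fderiv_apply_one_eq_deriv]
    have heq : (fun n => (ContinuousLinearMap.apply ℂ ℂ z) (p.derivSeries n fun _ => z))
        = fun n => ((n + 1 : ℕ):ℂ) * b (n + 1) * z ^ (n + 1) := by
      funext n
      simp only [ContinuousLinearMap.apply_apply]
      rw [p.derivSeries_apply_diag, hpdef, StmtAux.ps_apply, nsmul_eq_mul]
      push_cast
      ring
    rw [heq] at h2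
    simp only [ContinuousLinearMap.apply_apply] at h2
    rw [heval] at h2
    have h3 := (hasSum_nat_add_iff (f := fun n : ℕ => (n:ℂ) * b n * z ^ n) 1).mp (by
      convert h2 using 1)
    simpa using h3
  -- the bounded function and its coefficients
  set c : ℕ → ℂ := fun n => if n = 0 then (1 - μ)/(lam:ℂ) else ((1:ℂ) - n) * b n / (lam:ℂ)
    with hcdef
  set Ω : ℂ → ℂ := fun z => (G z - z * deriv G z - μ) / (lam:ℂ) with hΩdef
  have hlamne : ((lam:ℝ):ℂ) ≠ 0 := by exact_mod_cast (ne_of_gt hlam)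
  have hΩsum : ∀ z ∈ ball (0:ℂ) 1, HasSum (fun n => c n * z ^ n) (Ω z) := by
    intro z hz
    have h1 := (hGs z hz).sub (hdG z hz)
    have h2 : HasSum (fun n : ℕ => if n = 0 then μ else 0) μ := by
      simpa using hasSum_ite_eq (0:ℕ) μ
    have h3 := (h1.sub h2).div_const ((lam:ℝ):ℂ)
    have heq : (fun n : ℕ => (b n * z ^ n - (n:ℂ) * b n * z ^ n - if n = 0 then μ else 0)
        / ((lam:ℝ):ℂ)) = fun n : ℕ => c n * z ^ n := by
      funext n
      cases n with
      | zero =>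
        have hc : c 0 = (1 - μ)/(lam:ℂ) := by norm_num [hcdef]
        rw [hc]
        simp [hb0]
      | succ m =>
        have hc : c (m + 1) = ((1:ℂ) - (m + 1 : ℕ)) * b (m + 1) / (lam:ℂ) := by
          simp only [hcdef]
          rw [if_neg (Nat.succ_ne_zero m)]
        rw [hc]
        push_cast
        ring
    rwa [heq] at h3
  have hΩbd : ∀ z ∈ ball (0:ℂ) 1, ‖Ω z‖ ≤ 1 := by
    intro z hz
    have hnum : ‖G z - z * deriv G z - μ‖ ≤ lam := by
      rcases eq_or_ne z 0 with rfl | hz0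
      · simpa [hG0] using hμ.le
      · -- identify with (z/f z)^2 * f' z
        have hfz := hfne z hz hz0
        have hfd : DifferentiableAt ℂ f z := hdiff.differentiableAt (isOpen_ball.mem_nhds hz)
        have hopen : IsOpen (ball (0:ℂ) 1 ∩ {0}ᶜ) := isOpen_ball.inter isOpen_compl_singleton
        have hmemo : z ∈ ball (0:ℂ) 1 ∩ {0}ᶜ := ⟨hz, hz0⟩
        have hev : G =ᶠ[nhds z] fun w => w / f w := by
          apply Filter.eventuallyEq_of_mem (hopen.mem_nhds hmemo)
          intro w hw
          exact hGf w hw.1 hw.2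
        have hdq : HasDerivAt (fun w => w / f w)
            ((1 * f z - z * deriv f z) / f z ^ 2) z :=
          (hasDerivAt_id z).div (hfd.hasDerivAt) hfz
        have hderivG : deriv G z = (1 * f z - z * deriv f z) / f z ^ 2 := by
          rw [hev.deriv_eq, hdq.deriv]
        have hident : G z - z * deriv G z = (z / f z) ^ 2 * deriv f z := by
          rw [hderivG, hGf z hz hz0]
          field_simp
          ring
        rw [hident]
        exact (hU z hz hz0).le
    rw [hΩdef]
    simp only [norm_div, Complex.norm_real, Real.norm_eq_abs, abs_of_pos hlam]
    rw [div_le_one hlam]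
    exact hnum
  have hc0norm : ‖c 0‖ < 1 := by
    simp only [hcdef, if_pos rfl, norm_div, Complex.norm_real, Real.norm_eq_abs,
      abs_of_pos hlam]
    rw [div_lt_one hlam]
    exact hμ
  have hckey := StmtAux.schwarz_coeff c Ω hΩsum hΩbd hc0norm (k := k) (by omega)
  -- unpack
  have hkR : (1:ℝ) < (k:ℝ) := by exact_mod_cast (by omega : 1 < k)
  have hck : ‖c k‖ = ((k:ℝ) - 1) * ‖b k‖ / lam := by
    have hkne : k ≠ 0 := by omega
    have hc : c k = ((1:ℂ) - (k:ℂ)) * b k / (lam:ℂ) := by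
      simp only [hcdef]
      rw [if_neg hkne]
    have h1 : ((1:ℂ) - (k:ℂ)) = -((((k:ℝ) - 1 : ℝ)) : ℂ) := by push_cast; ring
    rw [hc, norm_div, norm_mul, h1, norm_neg, Complex.norm_real, Real.norm_eq_abs,
      abs_of_pos (by linarith), Complex.norm_real, Real.norm_eq_abs, abs_of_pos hlam]
  have hc0sq : ‖c 0‖ ^ 2 = ‖1 - μ‖ ^ 2 / lam ^ 2 := by
    simp only [hcdef, if_pos rfl, norm_div, Complex.norm_real, Real.norm_eq_abs,
      abs_of_pos hlam]
    rw [div_pow]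
  rw [hck, hc0sq] at hckey
  have hkpos : (0:ℝ) < (k:ℝ) - 1 := by linarith
  have step : ‖b k‖ = (lam / ((k:ℝ) - 1)) * (((k:ℝ) - 1) * ‖b k‖ / lam) := by
    field_simp
  rw [step]
  exact mul_le_mul_of_nonneg_left hckey (by positivity)
end

section
/- If f(z) = z + ∑_{n≥2} a_n z^n is analytic on 𝔻 with f(z) ≠ 0 for z ≠ 0, and |(z/f(z))²f'(z) − μ| < λ on 𝔻 where λ > 0 and |1−μ| < λ, then |a₂² − a₃| ≤ λ(1 − |1−μ|²/λ²). -/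
open Metric Complex

section Aux

open Filter Set

private lemma eq_at_zero_of_eventuallyEq' {g h : ℂ → ℂ} (hg : ContinuousAt g 0)
    (hh : ContinuousAt h 0)
    (heq : ∀ᶠ z in nhdsWithin (0:ℂ) {(0:ℂ)}ᶜ, g z = h z) : g 0 = h 0 :=
  tendsto_nhds_unique (hg.tendsto.mono_left nhdsWithin_le_nhds)
    (Filter.Tendsto.congr' (Filter.EventuallyEq.symm heq) (hh.tendsto.mono_left nhdsWithin_le_nhds))

private lemma mobius_lt_one' {c w : ℂ} (hc : ‖c‖ < 1) (hw : ‖w‖ < 1) :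
    ‖(w - c) / (1 - (starRingEnd ℂ) c * w)‖ < 1 := by
  have h1 : ‖(starRingEnd ℂ) c * w‖ < 1 := by
    rw [norm_mul, RCLike.norm_conj]
    exact lt_of_le_of_lt (mul_le_of_le_one_right (norm_nonneg c) hw.le) hc
  have hne : (1 : ℂ) - (starRingEnd ℂ) c * w ≠ 0 := by
    intro h
    have : (starRingEnd ℂ) c * w = 1 := by linear_combination -h
    rw [this] at h1; simp at h1
  rw [norm_div, div_lt_one (norm_pos_iff.mpr hne)]
  refine lt_of_pow_lt_pow_left₀ 2 (norm_nonneg _) ?_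
  have e1 : ‖w - c‖ ^ 2 = Complex.normSq (w - c) := by exact (Complex.sq_norm _)
  have e2 : ‖1 - (starRingEnd ℂ) c * w‖ ^ 2 = Complex.normSq (1 - (starRingEnd ℂ) c * w) := by
    exact (Complex.sq_norm _)
  have key : Complex.normSq (1 - (starRingEnd ℂ) c * w) - Complex.normSq (w - c)
      = (1 - Complex.normSq c) * (1 - Complex.normSq w) := by
    simp [Complex.normSq_apply, Complex.mul_re, Complex.mul_im, Complex.sub_re, Complex.sub_im,
      Complex.one_re, Complex.one_im, Complex.conj_re, Complex.conj_im]
    ring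
  have hc2 : Complex.normSq c < 1 := by
    rw [← Complex.sq_norm]
    have := norm_nonneg c
    nlinarith
  have hw2 : Complex.normSq w < 1 := by
    rw [← Complex.sq_norm]
    have := norm_nonneg w
    nlinarith
  rw [e1, e2]
  nlinarith

private lemma hasFPowerSeriesOnBall_of_rep' (f : ℂ → ℂ) (a : ℕ → ℂ)
    (hrep : ∀ z ∈ ball (0:ℂ) 1, HasSum (fun n : ℕ => a n * z ^ n) (f z)) :
    HasFPowerSeriesOnBall f (FormalMultilinearSeries.ofScalars ℂ a) 0 1 := by
  have hball : ∀ y : ℂ, y ∈ EMetric.ball (0:ℂ) 1 → y ∈ ball (0:ℂ) 1 := by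
    intro y hy
    replace hy := mem_eball_zero_iff.mp hy
    rw [enorm_eq_nnnorm] at hy
    rw [mem_ball_zero_iff]
    exact_mod_cast hy
  refine ⟨?_, one_pos, ?_⟩
  · refine ENNReal.le_of_forall_nnreal_lt fun r hr => ?_
    have hr1 : (r:ℝ) < 1 := by exact_mod_cast hr
    have hz : ((r:ℝ):ℂ) ∈ ball (0:ℂ) 1 := by
      rw [mem_ball_zero_iff, Complex.norm_real, Real.norm_eq_abs,
        _root_.abs_of_nonneg r.coe_nonneg]
      exact hr1
    have ht : Filter.Tendsto (fun n => a n * ((r:ℝ):ℂ)^n) Filter.atTop (nhds 0) :=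
      (hrep _ hz).summable.tendsto_atTop_zero
    apply FormalMultilinearSeries.le_radius_of_isBigO
    have hO := ht.isBigO_one ℝ
    have hfe : (fun n => ‖FormalMultilinearSeries.ofScalars ℂ a n‖ * (r:ℝ)^n)
        = fun n => ‖a n * ((r:ℝ):ℂ)^n‖ := by
      funext n
      rw [FormalMultilinearSeries.ofScalars_norm, norm_mul, norm_pow, Complex.norm_real,
        Real.norm_eq_abs, _root_.abs_of_nonneg r.coe_nonneg]
    rw [hfe]
    exact hO.norm_left
  · intro y hy
    have := hrep y (hball y hy)
    have he : ∀ n : ℕ, (FormalMultilinearSeries.ofScalars ℂ a) n (fun _ => y) = a n * y ^ n := by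
      intro n; rw [FormalMultilinearSeries.ofScalars_apply_eq, smul_eq_mul]
    simp only [he, zero_add]
    exact this

private lemma ofScalars_coeff' (a : ℕ → ℂ) (n : ℕ) :
    (FormalMultilinearSeries.ofScalars ℂ a).coeff n = a n := by
  show (FormalMultilinearSeries.ofScalars ℂ a) n (fun _ => 1) = a n
  rw [FormalMultilinearSeries.ofScalars_apply_eq, smul_eq_mul, one_pow, mul_one]

private lemma le_one_of_forall_le_inv_sq' {t : ℝ}
    (h : ∀ r : ℝ, 0 < r → r < 1 → t ≤ (1/r)/r) : t ≤ 1 := by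
  refine le_of_forall_pos_le_add fun ε hε => ?_
  have hs1 : 1 < Real.sqrt (1+ε) := by
    nlinarith [Real.sq_sqrt (by linarith : (0:ℝ) ≤ 1+ε), Real.sqrt_nonneg (1+ε)]
  have hs0 : (0:ℝ) < Real.sqrt (1+ε) := lt_trans one_pos hs1
  set r : ℝ := 1 / Real.sqrt (1+ε) with hrdef
  have hr0 : 0 < r := by positivity
  have hr1 : r < 1 := by
    rw [hrdef, div_lt_one hs0]
    exact hs1
  have h2 := h r hr0 hr1
  have heq : (1/r)/r = 1 + ε := by
    rw [div_div, ← pow_two, hrdef, div_pow, one_pow,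
      Real.sq_sqrt (by linarith : (0:ℝ) ≤ 1+ε), one_div_one_div]
  rwa [heq] at h2

end Aux

set_option maxHeartbeats 1000000 in
theorem stmt_10 (lam : ℝ) (μ : ℂ) (f : ℂ → ℂ) (a : ℕ → ℂ)
    (hlam : 0 < lam) (hμ : ‖1 - μ‖ < lam)
    (hdiff : DifferentiableOn ℂ f (ball (0:ℂ) 1))
    (ha0 : a 0 = 0) (ha1 : a 1 = 1)
    (hrep : ∀ z ∈ ball (0:ℂ) 1, HasSum (fun n : ℕ => a n * z ^ n) (f z))
    (hfne : ∀ z ∈ ball (0:ℂ) 1, z ≠ 0 → f z ≠ 0)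
    (hU : ∀ z ∈ ball (0:ℂ) 1, z ≠ 0 → ‖(z / f z) ^ 2 * deriv f z - μ‖ < lam) :
    ‖(a 2) ^ 2 - a 3‖ ≤ lam * (1 - ‖1 - μ‖ ^ 2 / lam ^ 2) := by
  have h0B : (0:ℂ) ∈ ball (0:ℂ) 1 := mem_ball_self one_pos
  have hBmem : ball (0:ℂ) 1 ∈ nhds (0:ℂ) := isOpen_ball.mem_nhds h0B
  have hlamC : ((lam:ℂ)) ≠ 0 := by exact_mod_cast hlam.ne'
  have hnormlam : ‖((lam:ℂ))‖ = lam := by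
    rw [Complex.norm_real, Real.norm_eq_abs, _root_.abs_of_pos hlam]
  -- power series of f
  set p := FormalMultilinearSeries.ofScalars ℂ a with hpdef
  have hpball : HasFPowerSeriesOnBall f p 0 1 := hasFPowerSeriesOnBall_of_rep' f a hrep
  have hpat : HasFPowerSeriesAt f p 0 := hpball.hasFPowerSeriesAt
  have hf0 : f 0 = 0 := by
    have h := hpat.coeff_zero (fun _ => 1)
    rw [← h]
    show p.coeff 0 = 0
    rw [hpdef, ofScalars_coeff', ha0]
  -- F = dslope f 0, F₂ = dslope F 0
  have hqF : HasFPowerSeriesAt (dslope f 0) p.fslope 0 :=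
    hpat.has_fpower_series_dslope_fslope
  have hqF₂ : HasFPowerSeriesAt (dslope (dslope f 0) 0) p.fslope.fslope 0 :=
    hqF.has_fpower_series_dslope_fslope
  set F : ℂ → ℂ := dslope f 0 with hFdef
  set F₂ : ℂ → ℂ := dslope F 0 with hF₂def
  have hF0 : F 0 = 1 := by
    have h := hqF.coeff_zero (fun _ => 1)
    rw [← h]
    show p.fslope.coeff 0 = 1
    rw [FormalMultilinearSeries.coeff_fslope, hpdef, ofScalars_coeff', ha1]
  have hF₂0 : F₂ 0 = a 2 := by
    have h := hqF₂.coeff_zero (fun _ => 1)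
    rw [← h]
    show p.fslope.fslope.coeff 0 = a 2
    rw [FormalMultilinearSeries.coeff_fslope, FormalMultilinearSeries.coeff_fslope, hpdef,
      ofScalars_coeff']
  have hdF₂0 : deriv F₂ 0 = a 3 := by
    have h := hqF₂.deriv
    rw [hF₂def, hFdef, h]
    show p.fslope.fslope.coeff 1 = a 3
    rw [FormalMultilinearSeries.coeff_fslope, FormalMultilinearSeries.coeff_fslope, hpdef,
      ofScalars_coeff']
  -- differentiability
  have hFdiff : DifferentiableOn ℂ F (ball (0:ℂ) 1) :=
    (Complex.differentiableOn_dslope hBmem).mpr hdiff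
  have hF₂diff : DifferentiableOn ℂ F₂ (ball (0:ℂ) 1) :=
    (Complex.differentiableOn_dslope hBmem).mpr hFdiff
  have hFat : ∀ z ∈ ball (0:ℂ) 1, DifferentiableAt ℂ F z := fun z hz =>
    hFdiff.differentiableAt (isOpen_ball.mem_nhds hz)
  have hF₂at : ∀ z ∈ ball (0:ℂ) 1, DifferentiableAt ℂ F₂ z := fun z hz =>
    hF₂diff.differentiableAt (isOpen_ball.mem_nhds hz)
  have hdF₂cont : ContinuousAt (deriv F₂) 0 :=
    (((hF₂diff.analyticOnNhd isOpen_ball).deriv 0 h0B).differentiableAt).continuousAt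
  -- basic identities
  have hfz : ∀ z : ℂ, f z = z * F z := by
    intro z
    rcases eq_or_ne z 0 with rfl | hz
    · simp [hf0]
    · rw [hFdef, dslope_of_ne _ hz, slope_def_field, hf0]
      field_simp
      ring
  have hFz : ∀ z : ℂ, F z = 1 + z * F₂ z := by
    intro z
    rcases eq_or_ne z 0 with rfl | hz
    · simp [hF0]
    · rw [hF₂def, dslope_of_ne _ hz, slope_def_field, hF0]
      field_simp
      ring
  have hFne : ∀ z ∈ ball (0:ℂ) 1, F z ≠ 0 := by
    intro z hz
    rcases eq_or_ne z 0 with rfl | hz0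
    · rw [hF0]; exact one_ne_zero
    · intro h
      exact hfne z hz hz0 (by rw [hfz z, h, mul_zero])
  have hderivf : ∀ z ∈ ball (0:ℂ) 1, deriv f z = F z + z * deriv F z := by
    intro z hz
    have h1 : deriv f z = deriv (fun w => w * F w) z :=
      Filter.EventuallyEq.deriv_eq (Filter.Eventually.of_forall hfz)
    rw [h1, deriv_fun_mul (c := fun w => w) differentiableAt_id (hFat z hz)]
    simp
  have hderivF : ∀ z ∈ ball (0:ℂ) 1, deriv F z = F₂ z + z * deriv F₂ z := by
    intro z hz
    have h1 : deriv F z = deriv (fun w => 1 + w * F₂ w) z :=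
      Filter.EventuallyEq.deriv_eq (Filter.Eventually.of_forall hFz)
    rw [h1, deriv_const_add, deriv_fun_mul (c := fun w => w) differentiableAt_id (hF₂at z hz)]
    simp
  have key : ∀ z ∈ ball (0:ℂ) 1, deriv f z - (F z)^2 = z^2 * (deriv F₂ z - (F₂ z)^2) := by
    intro z hz
    rw [hderivf z hz, hderivF z hz, hFz z]
    ring
  -- G and ψ
  set G : ℂ → ℂ := fun z => deriv f z / (F z)^2 with hGdef
  have hdf0 : deriv f 0 = 1 := by
    have := hderivf 0 h0B
    rw [this, hF0]; ring
  have hG0 : G 0 = 1 := by rw [hGdef]; simp [hdf0, hF0]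
  have hGlt : ∀ z ∈ ball (0:ℂ) 1, ‖G z - μ‖ < lam := by
    intro z hz
    rcases eq_or_ne z 0 with rfl | hz0
    · rw [hG0]; exact hμ
    · have halt : G z = (z / f z) ^ 2 * deriv f z := by
        rw [hGdef, hfz z]
        have h1 : z ≠ 0 := hz0
        have h2 : F z ≠ 0 := hFne z hz
        field_simp
      rw [halt]
      exact hU z hz hz0
  set ψ : ℂ → ℂ := fun z => (G z - μ) / (lam:ℂ) with hψdef
  set c0 : ℂ := (1 - μ) / (lam:ℂ) with hc0def
  have hψ0 : ψ 0 = c0 := by rw [hψdef, hc0def]; simp [hG0]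
  have hψlt : ∀ z ∈ ball (0:ℂ) 1, ‖ψ z‖ < 1 := by
    intro z hz
    rw [hψdef]
    simp only [norm_div, hnormlam]
    rw [div_lt_one hlam]
    exact hGlt z hz
  have hc0lt : ‖c0‖ < 1 := by
    have := hψlt 0 h0B
    rwa [hψ0] at this
  -- differentiability of ψ
  have hdfdiff : DifferentiableOn ℂ (deriv f) (ball (0:ℂ) 1) :=
    ((hdiff.analyticOnNhd isOpen_ball).deriv).differentiableOn
  have hGdiff : DifferentiableOn ℂ G (ball (0:ℂ) 1) :=
    hdfdiff.div (hFdiff.pow 2) (fun z hz => pow_ne_zero 2 (hFne z hz))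
  have hψdiff : DifferentiableOn ℂ ψ (ball (0:ℂ) 1) :=
    (hGdiff.sub (differentiableOn_const _)).div_const _
  set ψ₁ : ℂ → ℂ := dslope ψ 0 with hψ₁def
  set ψ₂ : ℂ → ℂ := dslope ψ₁ 0 with hψ₂def
  have hψ₁diff : DifferentiableOn ℂ ψ₁ (ball (0:ℂ) 1) :=
    (Complex.differentiableOn_dslope hBmem).mpr hψdiff
  have hψ₂diff : DifferentiableOn ℂ ψ₂ (ball (0:ℂ) 1) :=
    (Complex.differentiableOn_dslope hBmem).mpr hψ₁diff
  have hψ₂cont : ContinuousAt ψ₂ 0 :=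
    (hψ₂diff.differentiableAt hBmem).continuousAt
  have hψ₁cont : ContinuousAt ψ₁ 0 :=
    (hψ₁diff.differentiableAt hBmem).continuousAt
  have hFcont : ContinuousAt F 0 := (hFat 0 h0B).continuousAt
  have hF₂cont : ContinuousAt F₂ 0 := (hF₂at 0 h0B).continuousAt
  -- eventual membership
  have hev : ∀ᶠ z in nhdsWithin (0:ℂ) {(0:ℂ)}ᶜ, z ∈ ball (0:ℂ) 1 ∧ z ≠ 0 := by
    filter_upwards [mem_nhdsWithin_of_mem_nhds hBmem, self_mem_nhdsWithin] with z h1 h2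
    exact ⟨h1, h2⟩
  -- formula for ψ₁ off zero
  have hψ1form : ∀ z ∈ ball (0:ℂ) 1, z ≠ 0 →
      ψ₁ z = z * (deriv F₂ z - (F₂ z)^2) / ((lam:ℂ) * (F z)^2) := by
    intro z hz hz0
    have hF2 : (F z)^2 ≠ 0 := pow_ne_zero 2 (hFne z hz)
    rw [hψ₁def, dslope_of_ne _ hz0, slope_def_field, hψ0]
    have hG1 : G z - 1 = z^2 * (deriv F₂ z - (F₂ z)^2) / (F z)^2 := by
      rw [← key z hz, hGdef]
      rw [sub_div, div_self hF2]
    have : ψ z - c0 = (G z - 1) / (lam:ℂ) := by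
      rw [hψdef, hc0def]; ring
    rw [this, hG1]
    field_simp
    ring
  -- ψ₁ 0 = 0
  have hψ₁0 : ψ₁ 0 = 0 := by
    have hcont2 : ContinuousAt (fun z => z * (deriv F₂ z - (F₂ z)^2) / ((lam:ℂ) * (F z)^2)) 0 := by
      apply ContinuousAt.div
      · exact continuousAt_id.mul (hdF₂cont.sub (hF₂cont.pow 2))
      · exact continuousAt_const.mul (hFcont.pow 2)
      · rw [hF0]; simpa using hlamC
    have h := eq_at_zero_of_eventuallyEq' hψ₁cont hcont2
      (by filter_upwards [hev] with z hz; exact hψ1form z hz.1 hz.2)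
    rw [h]; simp
  -- formula for ψ₂ off zero
  have hψ2form : ∀ z ∈ ball (0:ℂ) 1, z ≠ 0 →
      ψ₂ z = (deriv F₂ z - (F₂ z)^2) / ((lam:ℂ) * (F z)^2) := by
    intro z hz hz0
    rw [hψ₂def, dslope_of_ne _ hz0, slope_def_field, hψ₁0, sub_zero, sub_zero,
      hψ1form z hz hz0]
    field_simp
  -- ψ₂ 0
  have hψ₂0 : ψ₂ 0 = (a 3 - (a 2)^2) / (lam:ℂ) := by
    have hcont2 : ContinuousAt (fun z => (deriv F₂ z - (F₂ z)^2) / ((lam:ℂ) * (F z)^2)) 0 := by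
      apply ContinuousAt.div
      · exact hdF₂cont.sub (hF₂cont.pow 2)
      · exact continuousAt_const.mul (hFcont.pow 2)
      · rw [hF0]; simpa using hlamC
    have h := eq_at_zero_of_eventuallyEq' hψ₂cont hcont2
      (by filter_upwards [hev] with z hz; exact hψ2form z hz.1 hz.2)
    rw [h]
    simp only [hdF₂0, hF₂0, hF0]
    rw [one_pow, mul_one]
  -- ψ z - c0 = z^2 * ψ₂ z
  have hψsub : ∀ z : ℂ, ψ z - c0 = z^2 * ψ₂ z := by
    intro z
    rcases eq_or_ne z 0 with rfl | hz0
    · rw [hψ0]; ring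
    · rw [hψ₂def, dslope_of_ne _ hz0, slope_def_field, hψ₁0, sub_zero, sub_zero,
        hψ₁def, dslope_of_ne _ hz0, slope_def_field, hψ0, sub_zero]
      field_simp
  -- ω
  set k : ℂ := (starRingEnd ℂ) c0 with hkdef
  set D : ℂ → ℂ := fun z => 1 - k * ψ z with hDdef
  have hDne : ∀ z ∈ ball (0:ℂ) 1, D z ≠ 0 := by
    intro z hz h
    have h1 : ‖k * ψ z‖ < 1 := by
      rw [norm_mul, hkdef, RCLike.norm_conj]
      exact lt_of_le_of_lt (mul_le_of_le_one_right (norm_nonneg c0) (hψlt z hz).le) hc0lt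
    have : k * ψ z = 1 := by rw [hDdef] at h; simp at h; linear_combination -h
    rw [this] at h1; simp at h1
  have hDcont : ContinuousAt D 0 := by
    apply continuousAt_const.sub
    exact continuousAt_const.mul ((hψdiff.differentiableAt hBmem).continuousAt)
  set ω : ℂ → ℂ := fun z => (ψ z - c0) / D z with hωdef
  have hω0 : ω 0 = 0 := by rw [hωdef]; simp [hψ0]
  have hωlt : ∀ z ∈ ball (0:ℂ) 1, ‖ω z‖ < 1 := by
    intro z hz
    rw [hωdef]
    exact mobius_lt_one' hc0lt (hψlt z hz)
  have hωdiff : DifferentiableOn ℂ ω (ball (0:ℂ) 1) := by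
    apply DifferentiableOn.div
    · exact hψdiff.sub (differentiableOn_const _)
    · exact (differentiableOn_const _).sub ((differentiableOn_const _).mul hψdiff)
    · exact hDne
  set ω₁ : ℂ → ℂ := dslope ω 0 with hω₁def
  set ω₂ : ℂ → ℂ := dslope ω₁ 0 with hω₂def
  have hω₁diff : DifferentiableOn ℂ ω₁ (ball (0:ℂ) 1) :=
    (Complex.differentiableOn_dslope hBmem).mpr hωdiff
  have hω₁cont : ContinuousAt ω₁ 0 := (hω₁diff.differentiableAt hBmem).continuousAt
  have hω₂cont : ContinuousAt (dslope ω₁ 0) 0 :=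
    ((((Complex.differentiableOn_dslope hBmem).mpr hω₁diff)).differentiableAt hBmem).continuousAt
  have hD0ne : D 0 ≠ 0 := hDne 0 h0B
  -- ω₁ formula and value at 0
  have hω1form : ∀ z ∈ ball (0:ℂ) 1, z ≠ 0 → ω₁ z = z * ψ₂ z / D z := by
    intro z hz hz0
    rw [hω₁def, dslope_of_ne _ hz0, slope_def_field, hω0, sub_zero, sub_zero]
    simp only [hωdef]
    rw [hψsub z]
    have := hDne z hz
    field_simp
  have hω₁0 : ω₁ 0 = 0 := by
    have hcont2 : ContinuousAt (fun z => z * ψ₂ z / D z) 0 :=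
      ContinuousAt.div (continuousAt_id.mul hψ₂cont) hDcont hD0ne
    have h := eq_at_zero_of_eventuallyEq' hω₁cont hcont2
      (by filter_upwards [hev] with z hz; exact hω1form z hz.1 hz.2)
    rw [h]; simp
  have hω2form : ∀ z ∈ ball (0:ℂ) 1, z ≠ 0 → ω₂ z = ψ₂ z / D z := by
    intro z hz hz0
    rw [hω₂def, dslope_of_ne _ hz0, slope_def_field, hω₁0, sub_zero, sub_zero,
      hω1form z hz hz0]
    have := hDne z hz
    field_simp
  have hω₂0 : ω₂ 0 = ψ₂ 0 / D 0 := by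
    have hcont2 : ContinuousAt (fun z => ψ₂ z / D z) 0 :=
      ContinuousAt.div hψ₂cont hDcont hD0ne
    exact eq_at_zero_of_eventuallyEq' hω₂cont hcont2
      (by filter_upwards [hev] with z hz; exact hω2form z hz.1 hz.2)
  -- Schwarz lemma, twice
  have hmaps : Set.MapsTo ω (ball (0:ℂ) 1) (ball (ω 0) 1) := by
    intro z hz
    rw [hω0, mem_ball_zero_iff]
    exact hωlt z hz
  have step1 : ∀ z ∈ ball (0:ℂ) 1, ‖ω₁ z‖ ≤ 1 := by
    intro z hz
    have := Complex.norm_dslope_le_div_of_mapsTo_ball hωdiff (fun z hz => ball_subset_closedBall (hmaps hz)) hz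
    simpa using this
  have step2 : ∀ r : ℝ, 0 < r → r < 1 → ‖ω₂ 0‖ ≤ (1/r)/r := by
    intro r hr0 hr1
    have hd : DifferentiableOn ℂ ω₁ (ball (0:ℂ) r) := hω₁diff.mono (ball_subset_ball hr1.le)
    have hm : Set.MapsTo ω₁ (ball (0:ℂ) r) (ball (ω₁ 0) (1/r)) := by
      intro z hz
      rw [hω₁0, mem_ball_zero_iff]
      exact lt_of_le_of_lt (step1 z (ball_subset_ball hr1.le hz)) ((one_lt_div hr0).mpr hr1)
    have h := Complex.norm_dslope_le_div_of_mapsTo_ball hd (fun z hz => ball_subset_closedBall (hm hz)) (mem_ball_self hr0)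
    exact h
  have hω₂le : ‖ω₂ 0‖ ≤ 1 := le_one_of_forall_le_inv_sq' step2
  -- assemble
  have hψω : ψ₂ 0 = ω₂ 0 * D 0 := by
    rw [hω₂0, div_mul_cancel₀ _ hD0ne]
  have hnormc0 : ‖c0‖ = ‖1 - μ‖ / lam := by
    rw [hc0def, norm_div, hnormlam]
  have hnsq : Complex.normSq c0 = ‖1 - μ‖^2 / lam^2 := by
    rw [← Complex.sq_norm, hnormc0, div_pow]
  have hnsqlt : Complex.normSq c0 < 1 := by
    rw [← Complex.sq_norm]
    nlinarith [norm_nonneg c0]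
  have hD0 : D 0 = ((1 - Complex.normSq c0 : ℝ) : ℂ) := by
    rw [hDdef]
    simp only [hψ0, hkdef]
    rw [mul_comm, Complex.mul_conj]
    push_cast
    ring
  have hD0norm : ‖D 0‖ = 1 - Complex.normSq c0 := by
    rw [hD0, Complex.norm_real, Real.norm_eq_abs, _root_.abs_of_pos (by linarith)]
  have hψ₂norm : ‖ψ₂ 0‖ ≤ 1 - Complex.normSq c0 := by
    calc ‖ψ₂ 0‖ = ‖ω₂ 0‖ * ‖D 0‖ := by rw [hψω, norm_mul]
    _ ≤ 1 * ‖D 0‖ := mul_le_mul_of_nonneg_right hω₂le (norm_nonneg _)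
    _ = 1 - Complex.normSq c0 := by rw [one_mul, hD0norm]
  have hval : ‖ψ₂ 0‖ = ‖a 3 - (a 2)^2‖ / lam := by
    rw [hψ₂0, norm_div, hnormlam]
  rw [hnsq, hval, div_le_iff₀ hlam] at hψ₂norm
  have hflip : ‖(a 2)^2 - a 3‖ = ‖a 3 - (a 2)^2‖ := norm_sub_rev _ _
  rw [hflip]
  linarith
end

section
/- Let λ > 0, μ ∈ ℂ, |1−μ| < λ, a = (1−μ)/λ, and let f be analytic on 𝔻 with f(0)=0, f'(0)=1, f(z)≠0 for z≠0, satisfying |(z/f(z))²f'(z) − μ| < λ on 𝔻. Then there exist c ∈ ℂ and an analytic ω on 𝔻 with |ω| ≤ 1 such that z/f(z) = 1 + cz − λz·∫₀^z (1−|a|²)ω(t)/(1 + conj(a)·t²·ω(t)) dt for all z ∈ 𝔻. -/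
open Metric Complex

/-- Integral of `F` along the segment from `0` to `z`. -/
noncomputable def segInt (F : ℂ → ℂ) (z : ℂ) : ℂ :=
  ∫ t in (0:ℝ)..1, z * F ((t : ℂ) * z)

lemma mobius_den_ne {a w : ℂ} (ha : ‖a‖ < 1) (hw : ‖w‖ < 1) :
    1 - (starRingEnd ℂ a) * w ≠ 0 := by
  intro h
  have h1 : (starRingEnd ℂ a) * w = 1 := by linear_combination -h
  have h2 : ‖(starRingEnd ℂ a) * w‖ < 1 := by
    rw [norm_mul, RCLike.norm_conj]
    nlinarith [norm_nonneg a, norm_nonneg w]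
  rw [h1] at h2; simp at h2

lemma normSq_lt_one_of_norm {a : ℂ} (ha : ‖a‖ < 1) : normSq a < 1 := by
  rw [← Complex.sq_norm]
  have : ‖a‖ < 1 := ha
  nlinarith [norm_nonneg a]

lemma mobius_lt {a w : ℂ} (ha : ‖a‖ < 1) (hw : ‖w‖ < 1) :
    ‖(w - a) / (1 - (starRingEnd ℂ a) * w)‖ < 1 := by
  have hd := mobius_den_ne ha hw
  rw [norm_div, div_lt_one (norm_pos_iff.2 hd)]
  have ha2 : a.re * a.re + a.im * a.im < 1 := by
    simpa [normSq_apply] using normSq_lt_one_of_norm ha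
  have hw2 : w.re * w.re + w.im * w.im < 1 := by
    simpa [normSq_apply] using normSq_lt_one_of_norm hw
  have key : normSq (w - a) < normSq (1 - (starRingEnd ℂ a) * w) := by
    simp only [normSq_apply, sub_re, sub_im, mul_re, mul_im, one_re, one_im, conj_re, conj_im]
    nlinarith [mul_pos (sub_pos.2 ha2) (sub_pos.2 hw2)]
  have h3 := Real.sqrt_lt_sqrt (normSq_nonneg _) key
  simpa [Complex.norm_def] using h3

lemma dslope_diffOn {f : ℂ → ℂ} (hf : DifferentiableOn ℂ f (ball (0:ℂ) 1)) :
    DifferentiableOn ℂ (dslope f 0) (ball (0:ℂ) 1) := by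
  intro z hz
  rcases eq_or_ne z 0 with rfl | hz0
  · obtain ⟨p, hp⟩ := hf.analyticAt (ball_mem_nhds _ one_pos)
    exact hp.has_fpower_series_dslope_fslope.differentiableAt.differentiableWithinAt
  · exact ((differentiableAt_dslope_of_ne hz0).2
      (hf.differentiableAt (isOpen_ball.mem_nhds hz))).differentiableWithinAt

theorem stmt_17 (lam : ℝ) (μ a : ℂ) (f : ℂ → ℂ)
    (hlam : 0 < lam) (hμ : ‖1 - μ‖ < lam) (ha : a = (1 - μ) / lam)
    (hdiff : DifferentiableOn ℂ f (ball (0:ℂ) 1))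
    (hf0 : f 0 = 0) (hf1 : deriv f 0 = 1)
    (hfne : ∀ z ∈ ball (0:ℂ) 1, z ≠ 0 → f z ≠ 0)
    (hU : ∀ z ∈ ball (0:ℂ) 1, z ≠ 0 → ‖(z / f z) ^ 2 * deriv f z - μ‖ < lam) :
    ∃ c : ℂ, ∃ ω : ℂ → ℂ, DifferentiableOn ℂ ω (ball (0:ℂ) 1) ∧
      (∀ z ∈ ball (0:ℂ) 1, ‖ω z‖ ≤ 1) ∧
      ∀ z ∈ ball (0:ℂ) 1, z ≠ 0 →
        z / f z = 1 + c * z - (lam : ℂ) * z *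
          segInt (fun t => ((1 - ‖a‖ ^ 2 : ℝ) : ℂ) * ω t /
            (1 + (starRingEnd ℂ a) * t ^ 2 * ω t)) z := by
  have hB : IsOpen (ball (0:ℂ) 1) := isOpen_ball
  have h0B : (0:ℂ) ∈ ball (0:ℂ) 1 := mem_ball_self one_pos
  have hlam0 : (lam:ℂ) ≠ 0 := by
    simpa using ne_of_gt (show (0:ℝ) < lam from hlam)
  have hanorm : ‖a‖ < 1 := by
    rw [ha, norm_div, Complex.norm_real, Real.norm_of_nonneg hlam.le, div_lt_one hlam]
    exact hμ
  -- the function F = f z / z, and g = z / f z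
  set F : ℂ → ℂ := dslope f 0 with hFdef
  have hFdiff : DifferentiableOn ℂ F (ball (0:ℂ) 1) := dslope_diffOn hdiff
  have hF0 : F 0 = 1 := by rw [hFdef, dslope_same, hf1]
  have hFz : ∀ z : ℂ, z ≠ 0 → F z = f z / z := by
    intro z h0
    rw [hFdef, dslope_of_ne _ h0, slope_def_field, hf0, sub_zero, sub_zero]
  have hFne : ∀ z ∈ ball (0:ℂ) 1, F z ≠ 0 := by
    intro z hz
    rcases eq_or_ne z 0 with rfl | h0
    · rw [hF0]; exact one_ne_zero
    · rw [hFz z h0]; exact div_ne_zero (hfne z hz h0) h0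
  set g : ℂ → ℂ := fun z => (F z)⁻¹ with hgdef
  have hgdiff : DifferentiableOn ℂ g (ball (0:ℂ) 1) := hFdiff.inv hFne
  have hgan : AnalyticOnNhd ℂ g (ball (0:ℂ) 1) := hgdiff.analyticOnNhd hB
  have hg0 : g 0 = 1 := by rw [hgdef]; simp [hF0]
  have hgz : ∀ z ∈ ball (0:ℂ) 1, z ≠ 0 → g z = z / f z := by
    intro z _ h0
    rw [hgdef]; simp only [hFz z h0, one_div, inv_div]
  have hsopen : IsOpen (ball (0:ℂ) 1 \ {0}) := hB.sdiff isClosed_singleton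
  have hgloc : ∀ z ∈ ball (0:ℂ) 1, z ≠ 0 → g =ᶠ[nhds z] fun w => w / f w := by
    intro z hz h0
    exact Filter.eventuallyEq_of_mem (hsopen.mem_nhds ⟨hz, h0⟩)
      (fun w hw => hgz w hw.1 (by simpa using hw.2))
  have hderivg : ∀ z ∈ ball (0:ℂ) 1, z ≠ 0 →
      deriv g z = (f z - z * deriv f z) / (f z)^2 := by
    intro z hz h0
    have hfz := hfne z hz h0
    have hfd : DifferentiableAt ℂ f z := hdiff.differentiableAt (hB.mem_nhds hz)
    rw [(hgloc z hz h0).deriv_eq]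
    have hdd : HasDerivAt (fun w => w / f w) ((1 * f z - z * deriv f z) / (f z)^2) z :=
      (hasDerivAt_id z).div hfd.hasDerivAt hfz
    rw [hdd.deriv, one_mul]
  have hkey : ∀ z ∈ ball (0:ℂ) 1, z ≠ 0 →
      g z - z * deriv g z = (z / f z)^2 * deriv f z := by
    intro z hz h0
    have hfz := hfne z hz h0
    rw [hgz z hz h0, hderivg z hz h0]
    field_simp
    ring
  -- the function Ω
  set Ω : ℂ → ℂ := fun z => (g z - z * deriv g z - μ) / (lam:ℂ) with hΩdef
  have hdgan : AnalyticOnNhd ℂ (deriv g) (ball (0:ℂ) 1) := hgan.deriv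
  have hΩdiff : DifferentiableOn ℂ Ω (ball (0:ℂ) 1) := by
    apply DifferentiableOn.div_const
    exact (hgdiff.sub (differentiableOn_id.mul hdgan.differentiableOn)).sub
      (differentiableOn_const μ)
  have hΩ0 : Ω 0 = a := by
    rw [hΩdef]; simp only [hg0, zero_mul, sub_zero, mul_zero]
    rw [ha]
  have hΩlt : ∀ z ∈ ball (0:ℂ) 1, ‖Ω z‖ < 1 := by
    intro z hz
    rcases eq_or_ne z 0 with rfl | h0
    · rw [hΩ0]; exact hanorm
    · rw [hΩdef]; simp only
      rw [hkey z hz h0, norm_div, Complex.norm_real, Real.norm_of_nonneg hlam.le, div_lt_one hlam]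
      exact hU z hz h0
  have hΩ'0 : deriv Ω 0 = 0 := by
    have h1 : DifferentiableAt ℂ (deriv g) 0 := (hdgan 0 h0B).differentiableAt
    have h2 : HasDerivAt g (deriv g 0) 0 :=
      (hgdiff.differentiableAt (hB.mem_nhds h0B)).hasDerivAt
    have h3 : HasDerivAt (fun z : ℂ => z * deriv g z)
        (1 * deriv g 0 + 0 * deriv (deriv g) 0) 0 :=
      (hasDerivAt_id (0:ℂ)).mul h1.hasDerivAt
    have h4 : HasDerivAt Ω ((deriv g 0 - (1 * deriv g 0 + 0 * deriv (deriv g) 0)) / (lam:ℂ)) 0 := by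
      rw [hΩdef]
      exact ((h2.sub h3).sub_const μ).div_const (lam:ℂ)
    rw [h4.deriv]; ring
  -- the function Φ
  set Φ : ℂ → ℂ := fun z => (Ω z - a) / (1 - (starRingEnd ℂ a) * Ω z) with hΦdef
  have hden : ∀ z ∈ ball (0:ℂ) 1, 1 - (starRingEnd ℂ a) * Ω z ≠ 0 :=
    fun z hz => mobius_den_ne hanorm (hΩlt z hz)
  have hΦlt : ∀ z ∈ ball (0:ℂ) 1, ‖Φ z‖ < 1 := by
    intro z hz; rw [hΦdef]; exact mobius_lt hanorm (hΩlt z hz)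
  have hΦ0 : Φ 0 = 0 := by rw [hΦdef]; simp [hΩ0]
  have hΦdiff : DifferentiableOn ℂ Φ (ball (0:ℂ) 1) := by
    rw [hΦdef]
    exact (hΩdiff.sub (differentiableOn_const a)).div
      ((differentiableOn_const 1).sub ((differentiableOn_const _).mul hΩdiff)) hden
  have hΦ'0 : deriv Φ 0 = 0 := by
    have hΩ0' : HasDerivAt Ω (deriv Ω 0) 0 :=
      (hΩdiff.differentiableAt (hB.mem_nhds h0B)).hasDerivAt
    have hN : HasDerivAt (fun z => Ω z - a) (deriv Ω 0) 0 := hΩ0'.sub_const a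
    have hD : HasDerivAt (fun z => 1 - (starRingEnd ℂ a) * Ω z)
        (0 - (starRingEnd ℂ a) * deriv Ω 0) 0 :=
      (hasDerivAt_const _ _).sub ((hΩ0'.const_mul _))
    have h4 : HasDerivAt Φ ((deriv Ω 0 * (1 - (starRingEnd ℂ a) * Ω 0) -
        (Ω 0 - a) * (0 - (starRingEnd ℂ a) * deriv Ω 0)) / (1 - (starRingEnd ℂ a) * Ω 0)^2) 0 := by
      rw [hΦdef]; exact hN.div hD (hden 0 h0B)
    rw [h4.deriv, hΩ'0, hΩ0]; ring
  -- ω via two dslopes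
  set g₁ : ℂ → ℂ := dslope Φ 0 with hg₁def
  set ω : ℂ → ℂ := dslope g₁ 0 with hωdef
  have hg₁diff : DifferentiableOn ℂ g₁ (ball (0:ℂ) 1) := dslope_diffOn hΦdiff
  have hωdiff : DifferentiableOn ℂ ω (ball (0:ℂ) 1) := dslope_diffOn hg₁diff
  have hg₁0 : g₁ 0 = 0 := by rw [hg₁def, dslope_same, hΦ'0]
  have hg₁le : ∀ z ∈ ball (0:ℂ) 1, ‖g₁ z‖ ≤ 1 := by
    intro z hz
    have hm : Set.MapsTo Φ (ball (0:ℂ) 1) (ball (Φ 0) 1) := by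
      intro w hw; rw [hΦ0]; exact mem_ball_zero_iff.2 (hΦlt w hw)
    simpa using Complex.norm_dslope_le_div_of_mapsTo_ball hΦdiff (hm.mono_right ball_subset_closedBall) hz
  have hωle : ∀ z ∈ ball (0:ℂ) 1, ‖ω z‖ ≤ 1 := by
    intro z hz
    refine le_of_forall_pos_le_add ?_
    intro ε hε
    have hm : Set.MapsTo g₁ (ball (0:ℂ) 1) (ball (g₁ 0) (1 + ε)) := by
      intro w hw; rw [hg₁0]
      exact mem_ball_zero_iff.2 (lt_of_le_of_lt (hg₁le w hw) (by linarith))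
    have := Complex.norm_dslope_le_div_of_mapsTo_ball hg₁diff (hm.mono_right ball_subset_closedBall) hz
    simpa using this
  have hΦeq : ∀ z ∈ ball (0:ℂ) 1, z ≠ 0 → Φ z = z^2 * ω z := by
    intro z hz h0
    have e1 : ω z = g₁ z / z := by
      rw [hωdef, dslope_of_ne _ h0, slope_def_field, hg₁0, sub_zero, sub_zero]
    have e2 : g₁ z = Φ z / z := by
      rw [hg₁def, dslope_of_ne _ h0, slope_def_field, hΦ0, sub_zero, sub_zero]
    rw [e1, e2]; field_simp
  have haa : (starRingEnd ℂ a) * a = ((‖a‖^2 : ℝ) : ℂ) := by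
    rw [mul_comm, Complex.mul_conj, Complex.normSq_eq_norm_sq]
  have hfrac : ∀ z ∈ ball (0:ℂ) 1, z ≠ 0 →
      (Ω z - a) / z^2 = ((1 - ‖a‖^2 : ℝ) : ℂ) * ω z / (1 + (starRingEnd ℂ a) * z^2 * ω z) := by
    intro z hz h0
    have hΦz := hΦeq z hz h0
    have hdz := hden z hz
    have h1ne : 1 + (starRingEnd ℂ a) * z^2 * ω z ≠ 0 := by
      intro h
      have hlt : ‖(starRingEnd ℂ a) * Φ z‖ < 1 := by
        rw [norm_mul, RCLike.norm_conj]
        nlinarith [norm_nonneg a, norm_nonneg (Φ z), hΦlt z hz, hanorm]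
      have : (starRingEnd ℂ a) * Φ z = -1 := by rw [hΦz]; linear_combination h
      rw [this] at hlt; simp at hlt
    have hE : z^2 * ω z * (1 - (starRingEnd ℂ a) * Ω z) = Ω z - a := by
      rw [← hΦz, hΦdef]
      exact div_mul_cancel₀ _ hdz
    have hΩval : Ω z = (a + z^2 * ω z) / (1 + (starRingEnd ℂ a) * z^2 * ω z) := by
      rw [eq_div_iff h1ne]; linear_combination -hE
    rw [hΩval]
    have hcast : ((1 - ‖a‖^2 : ℝ) : ℂ) = 1 - (starRingEnd ℂ a) * a := by
      rw [haa]; push_cast; ring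
    rw [hcast]
    rw [div_eq_div_iff (pow_ne_zero 2 h0) h1ne, div_sub' h1ne]
    rw [div_mul_eq_mul_div, div_eq_iff h1ne]
    ring
  -- the function G = (g z - 1)/z and the constant c
  set G : ℂ → ℂ := dslope g 0 with hGdef
  have hGdiff : DifferentiableOn ℂ G (ball (0:ℂ) 1) := dslope_diffOn hgdiff
  have hGan : AnalyticOnNhd ℂ G (ball (0:ℂ) 1) := hGdiff.analyticOnNhd hB
  have hG0 : G 0 = deriv g 0 := by rw [hGdef, dslope_same]
  have hGz : ∀ z : ℂ, z ≠ 0 → G z = (g z - 1) / z := by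
    intro z h0
    rw [hGdef, dslope_of_ne _ h0, slope_def_field, hg0, sub_zero]
  have hla : (lam:ℂ) * a = 1 - μ := by rw [ha]; field_simp
  have hG' : ∀ w ∈ ball (0:ℂ) 1, w ≠ 0 →
      deriv G w = -(lam:ℂ) * ((Ω w - a) / w^2) := by
    intro w hw h0
    have hGloc : G =ᶠ[nhds w] fun u => (g u - 1) / u :=
      Filter.eventuallyEq_of_mem (hsopen.mem_nhds ⟨hw, h0⟩)
        (fun u hu => hGz u (by simpa using hu.2))
    have hgd : HasDerivAt g (deriv g w) w :=
      (hgdiff.differentiableAt (hB.mem_nhds hw)).hasDerivAt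
    have hdd : HasDerivAt (fun u => (g u - 1) / u)
        ((deriv g w * w - (g w - 1) * 1) / w^2) w :=
      (hgd.sub_const 1).div (hasDerivAt_id w) h0
    have hΩw : (lam:ℂ) * Ω w = g w - w * deriv g w - μ := by
      rw [hΩdef]; field_simp
    have hnum : deriv g w * w - (g w - 1) * 1 = -(lam:ℂ) * (Ω w - a) := by
      linear_combination hΩw - hla
    rw [hGloc.deriv_eq, hdd.deriv, hnum, mul_div_assoc]
  refine ⟨deriv g 0, ω, hωdiff, hωle, ?_⟩
  intro z hz hz0
  have hmem : ∀ t ∈ Set.uIcc (0:ℝ) 1, (t:ℂ) * z ∈ ball (0:ℂ) 1 := by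
    intro t ht
    rw [Set.uIcc_of_le zero_le_one] at ht
    rw [mem_ball_zero_iff, norm_mul, Complex.norm_real, Real.norm_of_nonneg ht.1]
    have hz1 : ‖z‖ < 1 := mem_ball_zero_iff.1 hz
    nlinarith [norm_nonneg z, ht.2]
  have hds : ∀ t ∈ Set.uIcc (0:ℝ) 1,
      HasDerivAt (fun s : ℝ => G ((s:ℂ) * z)) (z * deriv G ((t:ℂ) * z)) t := by
    intro t ht
    have h1 : HasDerivAt G (deriv G ((t:ℂ) * z)) ((t:ℂ) * z) :=
      (hGdiff.differentiableAt (hB.mem_nhds (hmem t ht))).hasDerivAt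
    have h3 : HasDerivAt (fun w : ℂ => w * z) z (t:ℂ) := by
      simpa using (hasDerivAt_id ((t:ℂ))).mul_const z
    have h2 : HasDerivAt (fun w : ℂ => G (w * z)) (deriv G ((t:ℂ) * z) * z) (t:ℂ) :=
      HasDerivAt.comp _ h1 h3
    have := h2.comp_ofReal
    simpa [mul_comm] using this
  have hcd : ContinuousOn (deriv G) (ball (0:ℂ) 1) := (hGan.deriv).continuousOn
  have hcont : ContinuousOn (fun t : ℝ => z * deriv G ((t:ℂ) * z)) (Set.uIcc (0:ℝ) 1) := by
    apply continuousOn_const.mul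
    exact hcd.comp (Continuous.continuousOn (Complex.continuous_ofReal.mul continuous_const)) hmem
  have hFTC :=
    intervalIntegral.integral_eq_sub_of_hasDerivAt hds hcont.intervalIntegrable
  -- replace the integrand
  have hae : ∀ t ∈ Set.uIoc (0:ℝ) 1,
      z * deriv G ((t:ℂ) * z) =
        (-(lam:ℂ)) * (z * (((1 - ‖a‖^2 : ℝ) : ℂ) * ω ((t:ℂ)*z) /
          (1 + (starRingEnd ℂ a) * ((t:ℂ)*z)^2 * ω ((t:ℂ)*z)))) := by
    intro t ht
    rw [Set.uIoc_of_le zero_le_one] at ht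
    have ht' : t ∈ Set.uIcc (0:ℝ) 1 := by
      rw [Set.uIcc_of_le zero_le_one]; exact ⟨ht.1.le, ht.2⟩
    have htz : (t:ℂ) * z ∈ ball (0:ℂ) 1 := hmem t ht'
    have htz0 : (t:ℂ) * z ≠ 0 := by
      apply mul_ne_zero _ hz0
      exact_mod_cast ht.1.ne'
    rw [hG' _ htz htz0, ← hfrac _ htz htz0]
    ring
  have hint : (∫ t in (0:ℝ)..1, z * deriv G ((t:ℂ) * z)) =
      (-(lam:ℂ)) * segInt (fun t => ((1 - ‖a‖^2 : ℝ) : ℂ) * ω t /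
        (1 + (starRingEnd ℂ a) * t^2 * ω t)) z := by
    rw [intervalIntegral.integral_congr_ae (MeasureTheory.ae_of_all _ hae)]
    rw [segInt, ← intervalIntegral.integral_const_mul]
  rw [hint] at hFTC
  have hG1 : G ((1:ℝ) * z) = (g z - 1) / z := by
    rw [show ((1:ℝ):ℂ) * z = z by simp, hGz z hz0]
  have hG00 : G ((0:ℝ) * z) = deriv g 0 := by
    rw [show ((0:ℝ):ℂ) * z = 0 by simp, hG0]
  rw [hG1, hG00] at hFTC
  rw [← hgz z hz hz0]
  set S : ℂ := segInt (fun t => ((1 - ‖a‖^2 : ℝ) : ℂ) * ω t /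
    (1 + (starRingEnd ℂ a) * t^2 * ω t)) z with hSdef
  have h3 : (g z - 1) / z = deriv g 0 - (lam:ℂ) * S := by linear_combination -hFTC
  have h4 : g z - 1 = (deriv g 0 - (lam:ℂ) * S) * z := by
    rw [← h3, div_mul_cancel₀ _ hz0]
  linear_combination h4
end
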